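/- Fix d ≥ 1 and D ≥ 1. Let r_i : ℝ^D → ℝ (i = 1, …, d), θ_i : ℝ^D → ℝ (i = 1, …, d−1) and θ̄ : ℝ^D → ℝ be differentiable functions with Σ_{i=1}^{d} r_i(x)² = 1 for all x. Define θ_d = θ̄ − Σ_{i=1}^{d−1} r_i² θ_i and let U : ℝ^D → Matrix (Fin d) (Fin 1) ℂ be the column vector with entries U_i = r_i · exp(−i(θ_i + θ_d)) for i = 1, …, d−1 and U_d = r_d · exp(−i θ_d). Then for all x: (i) U(x)ᴴ · U(x) = 1 (the 1×1 identity), and (ii) for each coordinate direction μ of ℝ^D, i · (U(x)ᴴ · ∂_μ U(x)) = − Σ_{i=1}^{d−1} θ_i(x) · ∂_μ(r_i²)(x) + ∂_μ θ̄(x) (as a 1×1 matrix, i.e. a scalar identity). Thus U is a universal matrix for the abelian connection A = −Σ_{i=1}^{d−1} θ_i d(r_i²) + dθ̄. -/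

import Mathlib

open Matrix

/-- `θ_d = θ̄ − Σ_{i=1}^{d−1} r_i² θ_i` (here `d = n + 1`). -/
noncomputable def thetaLast {n D : ℕ} (r : Fin (n + 1) → (Fin D → ℝ) → ℝ)
    (θ : Fin n → (Fin D → ℝ) → ℝ) (θbar : (Fin D → ℝ) → ℝ) (x : Fin D → ℝ) : ℝ :=
  θbar x - ∑ i : Fin n, (r i.castSucc x) ^ 2 * θ i x

/-- The abelian universal matrix: the column vector with entries
`U_i = r_i·exp(−i(θ_i + θ_d))` for `i = 1, …, d−1` and `U_d = r_d·exp(−i θ_d)`. -/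
noncomputable def abelianU {n D : ℕ} (r : Fin (n + 1) → (Fin D → ℝ) → ℝ)
    (θ : Fin n → (Fin D → ℝ) → ℝ) (θbar : (Fin D → ℝ) → ℝ) (x : Fin D → ℝ) :
    Matrix (Fin (n + 1)) (Fin 1) ℂ :=
  fun i _ =>
    Fin.lastCases (motive := fun _ => ℂ)
      ((r (Fin.last n) x : ℂ) * Complex.exp (-Complex.I * (thetaLast r θ θbar x : ℂ)))
      (fun j => (r j.castSucc x : ℂ) *
        Complex.exp (-Complex.I * ((θ j x : ℂ) + (thetaLast r θ θbar x : ℂ))))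
      i

/-- Entrywise partial derivative of a matrix-valued function on `ℝ^D` in the
`μ`-th coordinate direction. -/
noncomputable def pderMat {D : ℕ} {ι κ : Type*} (F : (Fin D → ℝ) → Matrix ι κ ℂ)
    (μ : Fin D) (x : Fin D → ℝ) : Matrix ι κ ℂ :=
  fun i j => fderiv ℝ (fun y => F y i j) x (Pi.single μ 1)

/-- The phase of the `i`-th entry of the abelian universal matrix. -/
noncomputable def phiAux {n D : ℕ} (r : Fin (n + 1) → (Fin D → ℝ) → ℝ)
    (θ : Fin n → (Fin D → ℝ) → ℝ) (θbar : (Fin D → ℝ) → ℝ) (i : Fin (n + 1))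
    (x : Fin D → ℝ) : ℝ :=
  Fin.lastCases (motive := fun _ => ℝ) (thetaLast r θ θbar x)
    (fun j => θ j x + thetaLast r θ θbar x) i

lemma abelianU_apply {n D : ℕ} (r : Fin (n + 1) → (Fin D → ℝ) → ℝ)
    (θ : Fin n → (Fin D → ℝ) → ℝ) (θbar : (Fin D → ℝ) → ℝ) (x : Fin D → ℝ)
    (i : Fin (n + 1)) (j : Fin 1) :
    abelianU r θ θbar x i j =
      (r i x : ℂ) * Complex.exp (-Complex.I * (phiAux r θ θbar i x : ℂ)) := by
  induction i using Fin.lastCases with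
  | last => simp [abelianU, phiAux]
  | cast j => simp [abelianU, phiAux]

lemma star_abelianU {n D : ℕ} (r : Fin (n + 1) → (Fin D → ℝ) → ℝ)
    (θ : Fin n → (Fin D → ℝ) → ℝ) (θbar : (Fin D → ℝ) → ℝ) (x : Fin D → ℝ)
    (i : Fin (n + 1)) (j : Fin 1) :
    star (abelianU r θ θbar x i j) =
      (r i x : ℂ) * Complex.exp (Complex.I * (phiAux r θ θbar i x : ℂ)) := by
  rw [abelianU_apply]
  simp [star_mul', ← Complex.exp_conj, _root_.map_mul, Complex.conj_ofReal]

lemma exp_phi_cancel (a : ℂ) :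
    Complex.exp (Complex.I * a) * Complex.exp (-Complex.I * a) = 1 := by
  rw [← Complex.exp_add]
  ring_nf
  exact Complex.exp_zero

lemma phiAux_last {n D : ℕ} (r : Fin (n + 1) → (Fin D → ℝ) → ℝ)
    (θ : Fin n → (Fin D → ℝ) → ℝ) (θbar : (Fin D → ℝ) → ℝ) :
    phiAux r θ θbar (Fin.last n) = thetaLast r θ θbar :=
  funext fun x => by simp [phiAux]

lemma phiAux_castSucc {n D : ℕ} (r : Fin (n + 1) → (Fin D → ℝ) → ℝ)
    (θ : Fin n → (Fin D → ℝ) → ℝ) (θbar : (Fin D → ℝ) → ℝ) (j : Fin n) :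
    phiAux r θ θbar j.castSucc = fun x => θ j x + thetaLast r θ θbar x :=
  funext fun x => by simp [phiAux]

lemma fderiv_sq {D : ℕ} (f : (Fin D → ℝ) → ℝ) (x v : Fin D → ℝ)
    (hf : DifferentiableAt ℝ f x) :
    fderiv ℝ (fun y => f y ^ 2) x v = 2 * f x * fderiv ℝ f x v := by
  have h := hf.hasFDerivAt.mul hf.hasFDerivAt
  have he : (fun y => f y ^ 2) = fun y => f y * f y := by funext y; ring
  rw [he, HasFDerivAt.fderiv (f := fun y => f y * f y) h]
  simp
  ring

lemma cexp_entry_fderiv {D : ℕ} (f g : (Fin D → ℝ) → ℝ) (x : Fin D → ℝ)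
    (hf : DifferentiableAt ℝ f x) (hg : DifferentiableAt ℝ g x) (v : Fin D → ℝ) :
    fderiv ℝ (fun y => (f y : ℂ) * Complex.exp (-Complex.I * (g y : ℂ))) x v =
      (fderiv ℝ f x v : ℂ) * Complex.exp (-Complex.I * (g x : ℂ))
      + (f x : ℂ) * Complex.exp (-Complex.I * (g x : ℂ)) *
          (-Complex.I * (fderiv ℝ g x v : ℂ)) := by
  have h1 : HasFDerivAt (fun y => (f y : ℂ)) (Complex.ofRealCLM.comp (fderiv ℝ f x)) x :=
    Complex.ofRealCLM.hasFDerivAt.comp x hf.hasFDerivAt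
  have h2 : HasFDerivAt (fun y => -Complex.I * (g y : ℂ))
      ((-Complex.I) • (Complex.ofRealCLM.comp (fderiv ℝ g x))) x :=
    (Complex.ofRealCLM.hasFDerivAt.comp x hg.hasFDerivAt).const_mul _
  have h4 := h1.mul h2.cexp
  rw [HasFDerivAt.fderiv (f := fun y => (f y : ℂ) * Complex.exp (-Complex.I * (g y : ℂ))) h4]
  simp [smul_smul]
  ring

lemma sum_alg {n : ℕ} (s t q u : Fin n → ℝ) (sl b : ℝ)
    (h1 : (∑ j : Fin n, s j) + sl = 1) :
    (∑ j : Fin n, s j * (t j + (b - ∑ k : Fin n, (u k * q k + s k * t k))))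
      + sl * (b - ∑ k : Fin n, (u k * q k + s k * t k))
    = -(∑ j : Fin n, u j * q j) + b := by
  have e2 : ∑ k : Fin n, (u k * q k + s k * t k)
      = (∑ k : Fin n, u k * q k) + ∑ k : Fin n, s k * t k := Finset.sum_add_distrib
  have e1 : ∑ j : Fin n, s j * (t j + (b - ∑ k : Fin n, (u k * q k + s k * t k)))
      = (∑ j : Fin n, s j * t j)
        + (∑ j : Fin n, s j) * (b - ∑ k : Fin n, (u k * q k + s k * t k)) := by
    rw [Finset.sum_mul, ← Finset.sum_add_distrib]
    exact Finset.sum_congr rfl fun j _ => by ring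
  rw [e1, e2]
  linear_combination (b - ((∑ k : Fin n, u k * q k) + ∑ k : Fin n, s k * t k)) * h1

/-- The column vector `U` is a universal matrix for the abelian connection
`A = −Σ_{i=1}^{d−1} θ_i d(r_i²) + dθ̄`: it satisfies `Uᴴ U = 1` and
`i·Uᴴ ∂_μ U = −Σ_i θ_i ∂_μ(r_i²) + ∂_μ θ̄`. -/
theorem abelianU_is_universal_matrix {n D : ℕ} (hD : 1 ≤ D)
    (r : Fin (n + 1) → (Fin D → ℝ) → ℝ)
    (θ : Fin n → (Fin D → ℝ) → ℝ) (θbar : (Fin D → ℝ) → ℝ)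
    (hr : ∀ i, Differentiable ℝ (r i))
    (hθ : ∀ i, Differentiable ℝ (θ i))
    (hθbar : Differentiable ℝ θbar)
    (hnorm : ∀ x, ∑ i : Fin (n + 1), (r i x) ^ 2 = 1) :
    ∀ x : Fin D → ℝ,
      (abelianU r θ θbar x)ᴴ * abelianU r θ θbar x = 1 ∧
      ∀ μ : Fin D,
        Complex.I * ((abelianU r θ θbar x)ᴴ * pderMat (abelianU r θ θbar) μ x) 0 0 =
          ((-(∑ i : Fin n, θ i x *
                fderiv ℝ (fun y => (r i.castSucc y) ^ 2) x (Pi.single μ 1))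
              + fderiv ℝ θbar x (Pi.single μ 1) : ℝ) : ℂ) := by
  intro x
  constructor
  · ext a b
    fin_cases a; fin_cases b
    simp only [Matrix.mul_apply, Matrix.conjTranspose_apply, Matrix.one_apply_eq]
    calc ∑ i, star (abelianU r θ θbar x i 0) * abelianU r θ θbar x i 0
        = ∑ i : Fin (n + 1), ((r i x : ℂ) ^ 2) := by
          refine Finset.sum_congr rfl fun i _ => ?_
          rw [star_abelianU, abelianU_apply]
          rw [mul_mul_mul_comm, exp_phi_cancel, mul_one, sq]
      _ = 1 := by exact_mod_cast hnorm x
  · intro μ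
    set v : Fin D → ℝ := Pi.single μ 1 with hv
    have hθL : Differentiable ℝ (thetaLast r θ θbar) := by
      apply hθbar.sub
      apply Differentiable.fun_sum
      intro i _
      exact ((hr i.castSucc).pow 2).mul (hθ i)
    have hφ : ∀ i, Differentiable ℝ (phiAux r θ θbar i) := by
      intro i
      induction i using Fin.lastCases with
      | last => rw [phiAux_last]; exact hθL
      | cast j => rw [phiAux_castSucc]; exact (hθ j).add hθL
    have hA : ∑ i : Fin (n + 1), r i x * fderiv ℝ (r i) x v = 0 := by
      have h0 : fderiv ℝ (fun y => ∑ i : Fin (n + 1), (r i y) ^ 2) x v = 0 := by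
        rw [show (fun y => ∑ i : Fin (n + 1), (r i y) ^ 2) = fun _ => (1 : ℝ) from
          funext hnorm]
        simp
      rw [fderiv_fun_sum (A := fun i y => (r i y) ^ 2) (fun i _ => ((hr i).pow 2).differentiableAt)] at h0
      simp only [ContinuousLinearMap.sum_apply] at h0
      have h1 : ∀ i : Fin (n + 1), (fderiv ℝ (fun y => (r i y) ^ 2) x) v
          = 2 * r i x * fderiv ℝ (r i) x v := fun i =>
        fderiv_sq _ _ _ ((hr i).differentiableAt)
      simp only [h1] at h0
      have h2 : (2 : ℝ) * ∑ i : Fin (n + 1), r i x * fderiv ℝ (r i) x v = 0 := by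
        rw [Finset.mul_sum]; simpa [mul_assoc] using h0
      linarith
    have hT : fderiv ℝ (thetaLast r θ θbar) x v
        = fderiv ℝ θbar x v - ∑ j : Fin n,
            (θ j x * fderiv ℝ (fun y => (r j.castSucc y) ^ 2) x v
            + (r j.castSucc x) ^ 2 * fderiv ℝ (θ j) x v) := by
      have hdiff : ∀ j : Fin n, DifferentiableAt ℝ (fun y => (r j.castSucc y) ^ 2 * θ j y) x :=
        fun j => (((hr j.castSucc).pow 2).mul (hθ j)).differentiableAt
      have h1 : thetaLast r θ θbar
          = fun y => θbar y - ∑ j : Fin n, (r j.castSucc y) ^ 2 * θ j y := rfl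
      rw [h1, fderiv_fun_sub hθbar.differentiableAt (DifferentiableAt.fun_sum fun j _ => hdiff j)]
      simp only [ContinuousLinearMap.coe_sub', Pi.sub_apply]
      rw [fderiv_fun_sum (fun j _ => hdiff j)]
      simp only [ContinuousLinearMap.sum_apply]
      congr 1
      refine Finset.sum_congr rfl fun j _ => ?_
      rw [fderiv_fun_mul (c := fun y => (r j.castSucc y) ^ 2) ((hr j.castSucc).pow 2).differentiableAt (hθ j).differentiableAt]
      simp only [ContinuousLinearMap.add_apply, ContinuousLinearMap.smul_apply, smul_eq_mul]
      ring
    have entry : ∀ i : Fin (n + 1),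
        star (abelianU r θ θbar x i 0) * fderiv ℝ (fun y => abelianU r θ θbar y i 0) x v
        = ((r i x * fderiv ℝ (r i) x v : ℝ) : ℂ)
          + (-Complex.I) * (((r i x) ^ 2 * fderiv ℝ (phiAux r θ θbar i) x v : ℝ) : ℂ) := by
      intro i
      have hFeq : (fun y => abelianU r θ θbar y i 0) =
          fun y => (r i y : ℂ) * Complex.exp (-Complex.I * (phiAux r θ θbar i y : ℂ)) :=
        funext fun y => abelianU_apply r θ θbar y i 0
      rw [star_abelianU, hFeq,
        cexp_entry_fderiv _ _ _ ((hr i).differentiableAt) ((hφ i).differentiableAt)]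
      have hc := exp_phi_cancel (phiAux r θ θbar i x : ℂ)
      push_cast
      linear_combination ((r i x : ℂ) * (fderiv ℝ (r i) x v : ℂ)
        - Complex.I * ((r i x : ℂ) ^ 2 * (fderiv ℝ (phiAux r θ θbar i) x v : ℂ))) * hc
    have hmul : ((abelianU r θ θbar x)ᴴ * pderMat (abelianU r θ θbar) μ x) 0 0
        = ∑ i : Fin (n + 1), star (abelianU r θ θbar x i 0)
            * fderiv ℝ (fun y => abelianU r θ θbar y i 0) x v := by
      simp [Matrix.mul_apply, pderMat, Matrix.conjTranspose_apply, hv]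
    have hB : ∑ i : Fin (n + 1), (r i x) ^ 2 * fderiv ℝ (phiAux r θ θbar i) x v
        = -(∑ i : Fin n, θ i x * fderiv ℝ (fun y => (r i.castSucc y) ^ 2) x v)
          + fderiv ℝ θbar x v := by
      have hsum := hnorm x
      rw [Fin.sum_univ_castSucc] at hsum
      rw [Fin.sum_univ_castSucc]
      simp only [phiAux_castSucc, phiAux_last]
      have hadd : ∀ j : Fin n, fderiv ℝ (fun y => θ j y + thetaLast r θ θbar y) x v
          = fderiv ℝ (θ j) x v + fderiv ℝ (thetaLast r θ θbar) x v := by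
        intro j
        rw [fderiv_fun_add (hθ j).differentiableAt hθL.differentiableAt]
        simp
      simp only [hadd, hT]
      exact sum_alg _ _ _ _ _ _ hsum
    rw [hmul]
    simp only [entry]
    rw [Finset.sum_add_distrib, ← Finset.mul_sum, ← Complex.ofReal_sum, ← Complex.ofReal_sum,
      hA, hB]
    push_cast
    ring_nf
    rw [Complex.I_sq]
    ring
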